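/- Suppose both the primal feasible set X(b) and the dual feasible set Y(c) are nonempty (so that P* and D* are finite), and let ε > 0. If the point (c, D* − ε) does not belong to the closure of L*_p(K* × C*) = {(A* y − w, ⟨b,y⟩) : y ∈ K*, w ∈ C*}, then D* − P* ≤ ε. Symmetrically, if (b, P* + ε) does not belong to the closure of L*_d(C × K) = {(A x + s, ⟨c,x⟩) : x ∈ C, s ∈ K}, then D* − P* ≤ ε. -/

import Mathlib

open RealInnerProductSpace Set Pointwise

variable {E E' : Type*}
  [NormedAddCommGroup E] [InnerProductSpace ℝ E] [FiniteDimensional ℝ E]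
  [NormedAddCommGroup E'] [InnerProductSpace ℝ E'] [FiniteDimensional ℝ E']

/-- A nonempty closed convex cone containing `0`. -/
structure IsClosedConvexCone {F : Type*} [NormedAddCommGroup F] [InnerProductSpace ℝ F]
    (K : Set F) : Prop where
  closed : IsClosed K
  convex : Convex ℝ K
  smul_mem : ∀ ⦃x⦄, x ∈ K → ∀ ⦃t : ℝ⦄, 0 ≤ t → t • x ∈ K
  zero_mem : (0 : F) ∈ K

/-- The dual cone `S* = {y : ⟨x,y⟩ ≥ 0 ∀ x ∈ S}`. -/
def dualCone {F : Type*} [NormedAddCommGroup F] [InnerProductSpace ℝ F] (S : Set F) : Set F :=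
  {y | ∀ x ∈ S, 0 ≤ ⟪x, y⟫}

/-- The polar cone `S° = {y : ⟨x,y⟩ ≤ 0 ∀ x ∈ S}`. -/
def polarCone {F : Type*} [NormedAddCommGroup F] [InnerProductSpace ℝ F] (S : Set F) : Set F :=
  {y | ∀ x ∈ S, ⟪x, y⟫ ≤ 0}

/-- Primal feasible set `X(b) = {x ∈ C : b - A x ∈ K}`. -/
def Xfeas (A : E →ₗ[ℝ] E') (K : Set E') (C : Set E) (b : E') : Set E :=
  {x | x ∈ C ∧ b - A x ∈ K}

/-- Dual feasible set `Y(c) = {y ∈ K* : A* y - c ∈ C*}`. -/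
def Yfeas (A : E →ₗ[ℝ] E') (K : Set E') (C : Set E) (c : E) : Set E' :=
  {y | y ∈ dualCone K ∧ LinearMap.adjoint A y - c ∈ dualCone C}

/-- Primal optimal value `P* = sup {⟨c,x⟩ : x ∈ X(b)}`. -/
noncomputable def Pval (A : E →ₗ[ℝ] E') (K : Set E') (C : Set E) (b : E') (c : E) : ℝ :=
  sSup ((fun x => ⟪c, x⟫) '' Xfeas A K C b)

/-- Dual optimal value `D* = inf {⟨b,y⟩ : y ∈ Y(c)}`. -/
noncomputable def Dval (A : E →ₗ[ℝ] E') (K : Set E') (C : Set E) (b : E') (c : E) : ℝ :=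
  sInf ((fun y => ⟪b, y⟫) '' Yfeas A K C c)

/-- Recession cone of the primal feasible region: `{x ∈ C : A x ∈ -K}`. -/
def recXSet (A : E →ₗ[ℝ] E') (K : Set E') (C : Set E) : Set E :=
  {x | x ∈ C ∧ A x ∈ -K}

/-- Recession cone of the dual feasible region: `{y ∈ K* : A* y ∈ C*}`. -/
def recYSet (A : E →ₗ[ℝ] E') (K : Set E') (C : Set E) : Set E' :=
  {y | y ∈ dualCone K ∧ LinearMap.adjoint A y ∈ dualCone C}

/-- `X(b)` is almost feasible. -/
def AlmostFeasX (A : E →ₗ[ℝ] E') (K : Set E') (C : Set E) (b : E') : Prop :=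
  ∀ ε : ℝ, 0 < ε → ∃ bε : E', ‖bε‖ ≤ ε ∧ (Xfeas A K C (b + bε)).Nonempty

/-- `Y(c)` is almost feasible. -/
def AlmostFeasY (A : E →ₗ[ℝ] E') (K : Set E') (C : Set E) (c : E) : Prop :=
  ∀ ε : ℝ, 0 < ε → ∃ cε : E, ‖cε‖ ≤ ε ∧ (Yfeas A K C (c + cε)).Nonempty

section Aux

variable {F : Type*} [NormedAddCommGroup F] [InnerProductSpace ℝ F]

lemma dualCone_zero' (S : Set F) : (0 : F) ∈ dualCone S := fun x _ => by simp

lemma dualCone_smul' {S : Set F} {y : F} (hy : y ∈ dualCone S) {t : ℝ} (ht : 0 ≤ t) :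
    t • y ∈ dualCone S := fun x hx => by
  rw [real_inner_smul_right]; exact mul_nonneg ht (hy x hx)

lemma dualCone_add' {S : Set F} {y z : F} (hy : y ∈ dualCone S) (hz : z ∈ dualCone S) :
    y + z ∈ dualCone S := fun x hx => by
  rw [inner_add_right]; exact add_nonneg (hy x hx) (hz x hx)

lemma IsClosedConvexCone.add_mem {S : Set F} (h : IsClosedConvexCone S) {x y : F}
    (hx : x ∈ S) (hy : y ∈ S) : x + y ∈ S := by
  have h2 := h.convex hx hy (by norm_num : (0:ℝ) ≤ 1/2) (by norm_num : (0:ℝ) ≤ 1/2) (by norm_num)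
  have := h.smul_mem h2 (by norm_num : (0:ℝ) ≤ 2)
  have e : (2:ℝ) • ((1/2 : ℝ) • x + (1/2 : ℝ) • y) = x + y := by
    rw [smul_add, smul_smul, smul_smul]; norm_num
  rwa [e] at this

lemma mem_of_forall_dual {S : Set F} [FiniteDimensional ℝ F] (hS : IsClosedConvexCone S) {v : F}
    (hv : ∀ w ∈ dualCone S, 0 ≤ ⟪w, v⟫) : v ∈ S := by
  haveI : CompleteSpace F := FiniteDimensional.complete ℝ F
  by_contra h
  let Kc : ProperCone ℝ F :=
    { carrier := S
      add_mem' := fun hx hy => hS.add_mem hx hy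
      zero_mem' := hS.zero_mem
      smul_mem' := fun c x hx => hS.smul_mem hx c.2
      isClosed' := hS.closed }
  obtain ⟨y, hy1, hy2⟩ :=
    Kc.hyperplane_separation' (x₀ := v)
      (by exact h)
  exact absurd (hv y (fun x hx => hy1 x hx)) (by simpa [real_inner_comm] using hy2.not_ge)

/-- Separation of a point from the closure of a convex cone in `F × ℝ`. -/
lemma cone_sep [FiniteDimensional ℝ F] {s : Set (F × ℝ)} (h0 : (0 : F × ℝ) ∈ s)
    (hsmul : ∀ p ∈ s, ∀ t : ℝ, 0 < t → t • p ∈ s) (hconv : Convex ℝ s)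
    {p : F × ℝ} (hp : p ∉ closure s) :
    ∃ (v : F) (t : ℝ), (∀ q ∈ s, ⟪v, q.1⟫ + t * q.2 ≤ 0) ∧ 0 < ⟪v, p.1⟫ + t * p.2 := by
  haveI : CompleteSpace F := FiniteDimensional.complete ℝ F
  obtain ⟨f, u, hfs, hfp⟩ :=
    geometric_hahn_banach_closed_point hconv.closure isClosed_closure hp
  have hu : 0 < u := by simpa using hfs 0 (subset_closure h0)
  have hle : ∀ q ∈ s, f q ≤ 0 := by
    intro q hq
    by_contra hfq
    push_neg at hfq
    have ht : 0 < (u + 1) / f q := div_pos (by linarith) hfq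
    have := hfs _ (subset_closure (hsmul q hq _ ht))
    rw [map_smul, smul_eq_mul, div_mul_cancel₀ _ hfq.ne'] at this
    linarith
  set v := (InnerProductSpace.toDual ℝ F).symm (f.comp (ContinuousLinearMap.inl ℝ F ℝ)) with hv
  have hrep : ∀ q : F × ℝ, f q = ⟪v, q.1⟫ + q.2 * f (0, 1) := by
    intro q
    have h1 : ⟪v, q.1⟫ = f (q.1, 0) := by
      rw [hv]; simp [InnerProductSpace.toDual_symm_apply, real_inner_comm]
    have h2 : (q.1, (0:ℝ)) + (0, q.2) = q := by ext <;> simp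
    have h3 : (0, q.2) = q.2 • ((0,1) : F × ℝ) := by ext <;> simp
    rw [h1]
    calc f q = f ((q.1, 0) + (0, q.2)) := by rw [h2]
    _ = f (q.1, 0) + f (0, q.2) := map_add f _ _
    _ = f (q.1, 0) + q.2 * f (0, 1) := by rw [h3, map_smul, smul_eq_mul]
  refine ⟨v, f (0, 1), fun q hq => ?_, ?_⟩
  · have := hle q hq; rw [hrep q] at this; linarith [this]
  · have := hfp; rw [hrep p] at this; nlinarith [this, hu]

end Aux

lemma weak_dual (A : E →ₗ[ℝ] E') (K : Set E') (C : Set E) (b : E') (c : E)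
    {x : E} (hx : x ∈ Xfeas A K C b) {y : E'} (hy : y ∈ Yfeas A K C c) :
    ⟪c, x⟫ ≤ ⟪b, y⟫ := by
  have h1 : 0 ≤ ⟪x, LinearMap.adjoint A y - c⟫ := hy.2 x hx.1
  have h2 : 0 ≤ ⟪b - A x, y⟫ := hy.1 _ hx.2
  rw [inner_sub_left] at h2
  rw [inner_sub_right, LinearMap.adjoint_inner_right] at h1
  have e1 := real_inner_comm c x
  have e2 := real_inner_comm (A x) y
  linarith

theorem stmt6 (A : E →ₗ[ℝ] E') (K : Set E') (C : Set E)
    (hK : IsClosedConvexCone K) (hC : IsClosedConvexCone C) (b : E') (c : E)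
    (hXne : (Xfeas A K C b).Nonempty) (hYne : (Yfeas A K C c).Nonempty)
    (ε : ℝ) (hε : 0 < ε) :
    ((c, Dval A K C b c - ε) ∉
        closure {p : E × ℝ | ∃ y ∈ dualCone K, ∃ w ∈ dualCone C,
          p = (LinearMap.adjoint A y - w, ⟪b, y⟫)} →
      Dval A K C b c - Pval A K C b c ≤ ε) ∧
    ((b, Pval A K C b c + ε) ∉
        closure {p : E' × ℝ | ∃ x ∈ C, ∃ s ∈ K, p = (A x + s, ⟪c, x⟫)} →
      Dval A K C b c - Pval A K C b c ≤ ε) := by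
  obtain ⟨x₀, hx₀⟩ := hXne
  obtain ⟨y₀, hy₀⟩ := hYne
  have hbddA : BddAbove ((fun x => ⟪c, x⟫) '' Xfeas A K C b) :=
    ⟨⟪b, y₀⟫, by rintro r ⟨x, hx, rfl⟩; exact weak_dual A K C b c hx hy₀⟩
  have hbddB : BddBelow ((fun y => ⟪b, y⟫) '' Yfeas A K C c) :=
    ⟨⟪c, x₀⟫, by rintro r ⟨y, hy, rfl⟩; exact weak_dual A K C b c hx₀ hy⟩
  have hPle : ∀ x ∈ Xfeas A K C b, ⟪c, x⟫ ≤ Pval A K C b c :=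
    fun x hx => le_csSup hbddA ⟨x, hx, rfl⟩
  have hDle : ∀ y ∈ Yfeas A K C c, Dval A K C b c ≤ ⟪b, y⟫ :=
    fun y hy => csInf_le hbddB ⟨y, hy, rfl⟩
  constructor
  · -- Part 1
    intro hcl
    have h0 : (0 : E × ℝ) ∈ {p : E × ℝ | ∃ y ∈ dualCone K, ∃ w ∈ dualCone C,
        p = (LinearMap.adjoint A y - w, ⟪b, y⟫)} :=
      ⟨0, dualCone_zero' K, 0, dualCone_zero' C, by simp [Prod.ext_iff]⟩
    have hsmul : ∀ p ∈ {p : E × ℝ | ∃ y ∈ dualCone K, ∃ w ∈ dualCone C,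
        p = (LinearMap.adjoint A y - w, ⟪b, y⟫)}, ∀ t : ℝ, 0 < t → t • p ∈
        {p : E × ℝ | ∃ y ∈ dualCone K, ∃ w ∈ dualCone C,
        p = (LinearMap.adjoint A y - w, ⟪b, y⟫)} := by
      rintro p ⟨y, hy, w, hw, rfl⟩ t ht
      exact ⟨t • y, dualCone_smul' hy ht.le, t • w, dualCone_smul' hw ht.le, by
        simp [Prod.ext_iff, smul_sub, map_smul, real_inner_smul_right, Prod.smul_mk, smul_eq_mul]⟩
    have hconv : Convex ℝ {p : E × ℝ | ∃ y ∈ dualCone K, ∃ w ∈ dualCone C,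
        p = (LinearMap.adjoint A y - w, ⟪b, y⟫)} := by
      rintro p ⟨y1, hy1, w1, hw1, rfl⟩ q ⟨y2, hy2, w2, hw2, rfl⟩ a1 a2 ha1 ha2 hab
      refine ⟨a1 • y1 + a2 • y2, dualCone_add' (dualCone_smul' hy1 ha1) (dualCone_smul' hy2 ha2),
        a1 • w1 + a2 • w2, dualCone_add' (dualCone_smul' hw1 ha1) (dualCone_smul' hw2 ha2), ?_⟩
      simp only [Prod.ext_iff, Prod.smul_mk, Prod.mk_add_mk, map_add, map_smul, smul_sub,
        inner_add_right, real_inner_smul_right, smul_eq_mul]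
      constructor
      · module
      · trivial
    obtain ⟨v, t, hle, hpos0⟩ := cone_sep h0 hsmul hconv hcl
    have hpos : 0 < ⟪v, c⟫ + t * (Dval A K C b c - ε) := hpos0
    rcases lt_or_ge t 0 with ht | ht
    · -- t < 0 : construct primal feasible point
      have htpos : 0 < -t := by linarith
      have hvC : v ∈ C := by
        apply mem_of_forall_dual hC
        intro w hw
        have h1 := hle _ ⟨0, dualCone_zero' K, w, hw, rfl⟩
        simp only [map_zero, zero_sub, inner_neg_right, inner_zero_right, mul_zero,
          add_zero, neg_nonpos] at h1
        rwa [real_inner_comm]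
      have hKm : -(A v + t • b) ∈ K := by
        apply mem_of_forall_dual hK
        intro y hy
        have h1 := hle _ ⟨y, hy, 0, dualCone_zero' C, rfl⟩
        simp only [sub_zero, LinearMap.adjoint_inner_right] at h1
        rw [inner_neg_right, inner_add_right, real_inner_smul_right,
          real_inner_comm (A v) y, real_inner_comm b y]
        linarith
      have hxf : (-t)⁻¹ • v ∈ Xfeas A K C b := by
        refine ⟨hC.smul_mem hvC (inv_nonneg.2 htpos.le), ?_⟩
        have e : b - A ((-t)⁻¹ • v) = (-t)⁻¹ • (-(A v + t • b)) := by
          rw [map_smul, smul_neg, smul_add, smul_smul]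
          have : (-t)⁻¹ * t = -1 := by rw [inv_neg, neg_mul, inv_mul_cancel₀ (by linarith : t ≠ 0)]
          rw [this]
          simp
        rw [e]
        exact hK.smul_mem hKm (inv_nonneg.2 htpos.le)
      have hP := hPle _ hxf
      rw [real_inner_smul_right] at hP
      have h3 : (-t) * (Dval A K C b c - ε) < ⟪c, v⟫ := by
        rw [real_inner_comm]; nlinarith
      have h4 := mul_lt_mul_of_pos_left h3 (inv_pos.2 htpos)
      rw [← mul_assoc, inv_mul_cancel₀ htpos.ne', one_mul] at h4
      linarith
    · -- t ≥ 0 : contradiction with dual feasibility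
      exfalso
      have hq := hle (c, ⟪b, y₀⟫) ⟨y₀, hy₀.1, LinearMap.adjoint A y₀ - c, hy₀.2, by
        simp [Prod.ext_iff]⟩
      have hD := hDle y₀ hy₀
      nlinarith [mul_le_mul_of_nonneg_left hD ht, mul_nonneg ht hε.le]
  · -- Part 2
    intro hcl
    have h0 : (0 : E' × ℝ) ∈ {p : E' × ℝ | ∃ x ∈ C, ∃ s ∈ K, p = (A x + s, ⟪c, x⟫)} :=
      ⟨0, hC.zero_mem, 0, hK.zero_mem, by simp [Prod.ext_iff]⟩
    have hsmul : ∀ p ∈ {p : E' × ℝ | ∃ x ∈ C, ∃ s ∈ K, p = (A x + s, ⟪c, x⟫)}, ∀ t : ℝ,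
        0 < t → t • p ∈ {p : E' × ℝ | ∃ x ∈ C, ∃ s ∈ K, p = (A x + s, ⟪c, x⟫)} := by
      rintro p ⟨x, hx, s, hs, rfl⟩ t ht
      exact ⟨t • x, hC.smul_mem hx ht.le, t • s, hK.smul_mem hs ht.le, by
        simp [Prod.ext_iff, smul_add, map_smul, real_inner_smul_right, Prod.smul_mk, smul_eq_mul]⟩
    have hconv : Convex ℝ {p : E' × ℝ | ∃ x ∈ C, ∃ s ∈ K, p = (A x + s, ⟪c, x⟫)} := by
      rintro p ⟨x1, hx1, s1, hs1, rfl⟩ q ⟨x2, hx2, s2, hs2, rfl⟩ a1 a2 ha1 ha2 hab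
      refine ⟨a1 • x1 + a2 • x2, hC.add_mem (hC.smul_mem hx1 ha1) (hC.smul_mem hx2 ha2),
        a1 • s1 + a2 • s2, hK.add_mem (hK.smul_mem hs1 ha1) (hK.smul_mem hs2 ha2), ?_⟩
      simp only [Prod.ext_iff, Prod.smul_mk, Prod.mk_add_mk, map_add, map_smul, smul_add,
        inner_add_right, real_inner_smul_right, smul_eq_mul]
      constructor
      · module
      · trivial
    obtain ⟨v, t, hle, hpos0⟩ := cone_sep h0 hsmul hconv hcl
    have hpos : 0 < ⟪v, b⟫ + t * (Pval A K C b c + ε) := hpos0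
    rcases le_or_gt t 0 with ht | ht
    · -- t ≤ 0 : contradiction with primal feasibility
      exfalso
      have hq := hle (b, ⟪c, x₀⟫) ⟨x₀, hx₀.1, b - A x₀, hx₀.2, by simp [Prod.ext_iff]⟩
      have hP := hPle x₀ hx₀
      nlinarith [mul_le_mul_of_nonpos_left hP ht, mul_nonpos_of_nonpos_of_nonneg ht hε.le]
    · -- t > 0 : construct dual feasible point
      have hy'K : t⁻¹ • (-v) ∈ dualCone K := by
        intro z hz
        have h1 := hle (z, 0) ⟨0, hC.zero_mem, z, hz, by simp [Prod.ext_iff]⟩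
        simp only [mul_zero, add_zero] at h1
        rw [real_inner_smul_right, inner_neg_right]
        have e1 := real_inner_comm z v
        have : 0 ≤ -⟪z, v⟫ := by linarith
        exact mul_nonneg (inv_nonneg.2 ht.le) this
      have hy'C : LinearMap.adjoint A (t⁻¹ • (-v)) - c ∈ dualCone C := by
        intro z hz
        have hq := hle (A z + 0, ⟪c, z⟫) ⟨z, hz, 0, hK.zero_mem, by simp [Prod.ext_iff]⟩
        simp only [add_zero] at hq
        rw [inner_sub_right, LinearMap.adjoint_inner_right, real_inner_smul_right,
          inner_neg_right]
        have e1 := real_inner_comm (A z) v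
        have e2 := real_inner_comm c z
        have h3 : t * ⟪c, z⟫ ≤ -⟪A z, v⟫ := by linarith
        have h4 := mul_le_mul_of_nonneg_left h3 (inv_nonneg.2 ht.le)
        rw [← mul_assoc, inv_mul_cancel₀ ht.ne', one_mul] at h4
        linarith
      have hD := hDle _ ⟨hy'K, hy'C⟩
      rw [real_inner_smul_right, inner_neg_right] at hD
      have h5 : -⟪b, v⟫ < t * (Pval A K C b c + ε) := by
        have := real_inner_comm b v; linarith
      have h6 := mul_lt_mul_of_pos_left h5 (inv_pos.2 ht)
      rw [← mul_assoc, inv_mul_cancel₀ ht.ne', one_mul] at h6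
      linarith
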